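/- Let k > 2, M ≥ 0 and 0 < μ ≤ 1. Let (f_n)_{n≥1} be a real sequence with Σ_{n≥1} (1+n²)^{2k} f_n² ≤ M². Then (Σ_{n≥1} (μ² f_n / (μ² + Φ(n,φ)²))²)^{1/2} ≤ max{1, D₂² / [B₁(1 − e^{−D₁T})]²} · M · μ. (This bounds the bias ‖f − f_μ‖ of the Tikhonov approximation with exact data.) -/

import Mathlib

set_option maxHeartbeats 1000000

/-- Lower bound on the integral `∫₀ᵀ e^{q B(t)} φ(t) dt`. -/
lemma phi_lower_bound
    (T D₁ D₂ B₁ : ℝ) (hT : 0 < T) (hD₁ : 0 < D₁) (hD₁₂ : D₁ ≤ D₂)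
    (hB₁ : 0 < B₁)
    (a φ : ℝ → ℝ) (ha : ContinuousOn a (Set.Icc 0 T)) (hφc : ContinuousOn φ (Set.Icc 0 T))
    (haB : ∀ t ∈ Set.Icc 0 T, D₁ ≤ a t ∧ a t ≤ D₂)
    (hφB : ∀ t ∈ Set.Icc 0 T, B₁ ≤ φ t)
    (A Bf : ℝ → ℝ) (hA : ∀ t, A t = ∫ s in (0:ℝ)..t, a s)
    (hBf : ∀ t, Bf t = A t - A T)
    (q : ℝ) (hq : 1 ≤ q) :
    B₁ * (1 - Real.exp (-D₁ * T)) / (q * D₂) ≤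
      ∫ t in (0:ℝ)..T, Real.exp (q * Bf t) * φ t := by
  have hD₂ : 0 < D₂ := lt_of_lt_of_le hD₁ hD₁₂
  have hq0 : 0 < q := lt_of_lt_of_le one_pos hq
  set c : ℝ := q * D₂ with hc_def
  have hc : 0 < c := mul_pos hq0 hD₂
  -- interval integrability of a
  have hu : Set.uIcc (0:ℝ) T = Set.Icc 0 T := Set.uIcc_of_le hT.le
  have haI : IntervalIntegrable a MeasureTheory.volume 0 T := by
    apply ContinuousOn.intervalIntegrable; rwa [hu]
  -- Bf lower bound
  have hBf_lb : ∀ t ∈ Set.Icc (0:ℝ) T, D₂ * (t - T) ≤ Bf t := by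
    intro t ht
    have ht0 := ht.1
    have htT := ht.2
    have hsub1 : Set.uIcc t T ⊆ Set.uIcc (0:ℝ) T := by
      rw [hu, Set.uIcc_of_le htT]; exact Set.Icc_subset_Icc ht0 le_rfl
    have hsub2 : Set.uIcc (0:ℝ) t ⊆ Set.uIcc (0:ℝ) T := by
      rw [hu, Set.uIcc_of_le ht0]; exact Set.Icc_subset_Icc le_rfl htT
    have haI1 : IntervalIntegrable a MeasureTheory.volume t T := haI.mono_set hsub1
    have haI2 : IntervalIntegrable a MeasureTheory.volume 0 t := haI.mono_set hsub2
    have hadd : (∫ s in (0:ℝ)..t, a s) + ∫ s in t..T, a s = ∫ s in (0:ℝ)..T, a s :=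
      intervalIntegral.integral_add_adjacent_intervals haI2 haI1
    have hmono : (∫ s in t..T, a s) ≤ ∫ s in t..T, D₂ := by
      apply intervalIntegral.integral_mono_on htT haI1 intervalIntegrable_const
      intro s hs
      exact (haB s ⟨le_trans ht0 hs.1, hs.2⟩).2
    have hconst : (∫ s in t..T, (D₂:ℝ)) = (T - t) * D₂ := by
      simp [intervalIntegral.integral_const, smul_eq_mul]
    rw [hBf t, hA t, hA T]
    nlinarith [hmono, hconst, hadd]
  -- continuity of Bf on Icc
  have hAfun : A = fun t => ∫ s in (0:ℝ)..t, a s := funext hA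
  have hAc : ContinuousOn A (Set.Icc 0 T) := by
    rw [hAfun, ← hu]
    exact intervalIntegral.continuousOn_primitive_interval' haI Set.left_mem_uIcc
  have hBfc : ContinuousOn Bf (Set.Icc 0 T) := by
    have : Bf = fun t => A t - A T := funext hBf
    rw [this]
    exact hAc.sub continuousOn_const
  have hIc : ContinuousOn (fun t => Real.exp (q * Bf t) * φ t) (Set.Icc 0 T) :=
    (Real.continuous_exp.comp_continuousOn (continuousOn_const.mul hBfc)).mul hφc
  have hII : IntervalIntegrable (fun t => Real.exp (q * Bf t) * φ t) MeasureTheory.volume 0 T := by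
    apply ContinuousOn.intervalIntegrable; rwa [hu]
  -- exact value of the lower integral
  have hexact : (∫ t in (0:ℝ)..T, B₁ * Real.exp (c * (t - T)))
      = B₁ / c * (1 - Real.exp (-(c * T))) := by
    have hderiv : ∀ t ∈ Set.uIcc (0:ℝ) T,
        HasDerivAt (fun t => B₁ / c * Real.exp (c * (t - T)))
          (B₁ * Real.exp (c * (t - T))) t := by
      intro t _
      have h1 : HasDerivAt (fun t : ℝ => c * (t - T)) c t := by
        simpa using ((hasDerivAt_id t).sub_const T).const_mul c
      have h2 := (h1.exp).const_mul (B₁ / c)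
      refine h2.congr_deriv ?_
      field_simp [hc.ne']
    have hint : IntervalIntegrable (fun t => B₁ * Real.exp (c * (t - T)))
        MeasureTheory.volume 0 T :=
      (Continuous.intervalIntegrable (by continuity) 0 T)
    rw [intervalIntegral.integral_eq_sub_of_hasDerivAt hderiv hint]
    simp only [sub_self, mul_zero, Real.exp_zero, mul_one, zero_sub, mul_neg]
    ring
  -- pointwise bound
  have hmono2 : (∫ t in (0:ℝ)..T, B₁ * Real.exp (c * (t - T)))
      ≤ ∫ t in (0:ℝ)..T, Real.exp (q * Bf t) * φ t := by
    apply intervalIntegral.integral_mono_on hT.le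
      (Continuous.intervalIntegrable (by continuity) 0 T) hII
    intro t ht
    have h1 : c * (t - T) ≤ q * Bf t := by
      have := hBf_lb t ht
      have h2 : q * (D₂ * (t - T)) ≤ q * Bf t :=
        mul_le_mul_of_nonneg_left this hq0.le
      calc c * (t - T) = q * (D₂ * (t - T)) := by ring
        _ ≤ q * Bf t := h2
    have h3 : Real.exp (c * (t - T)) ≤ Real.exp (q * Bf t) := Real.exp_le_exp.mpr h1
    have h4 := hφB t ht
    nlinarith [Real.exp_pos (c * (t - T)), Real.exp_pos (q * Bf t)]
  -- compare constants
  have hcc : B₁ * (1 - Real.exp (-D₁ * T)) / c ≤ B₁ / c * (1 - Real.exp (-(c * T))) := by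
    have hDc : D₁ ≤ c := by
      rw [hc_def]
      nlinarith
    have h1 : D₁ * T ≤ c * T := mul_le_mul_of_nonneg_right hDc hT.le
    have h2 : Real.exp (-(c * T)) ≤ Real.exp (-D₁ * T) := Real.exp_le_exp.mpr (by linarith)
    have h3 : B₁ * (1 - Real.exp (-D₁ * T)) ≤ B₁ * (1 - Real.exp (-(c * T))) := by nlinarith
    calc B₁ * (1 - Real.exp (-D₁ * T)) / c ≤ B₁ * (1 - Real.exp (-(c * T))) / c := by gcongr
      _ = B₁ / c * (1 - Real.exp (-(c * T))) := by ring
  linarith [hmono2, hexact ▸ hcc]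


/-- bias bound, `k > 2`: if `Σ (1+n²)^{2k} f_n² ≤ M²` and `0 < μ ≤ 1`, then
`(Σ (μ² f_n/(μ² + Φ(n,φ)²))²)^{1/2} ≤ max{1, D₂²/[B₁(1−e^{−D₁T})]²} · M · μ`. -/
theorem stmt_9
    (T D₁ D₂ B₁ B₂ : ℝ) (hT : 0 < T) (hD₁ : 0 < D₁) (hD₁₂ : D₁ ≤ D₂)
    (hB₁ : 0 < B₁) (hB₁₂ : B₁ ≤ B₂)
    (a φ : ℝ → ℝ) (ha : ContinuousOn a (Set.Icc 0 T)) (hφc : ContinuousOn φ (Set.Icc 0 T))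
    (haB : ∀ t ∈ Set.Icc 0 T, D₁ ≤ a t ∧ a t ≤ D₂)
    (hφB : ∀ t ∈ Set.Icc 0 T, B₁ ≤ φ t ∧ φ t ≤ B₂)
    (A Bf : ℝ → ℝ) (hA : ∀ t, A t = ∫ s in (0:ℝ)..t, a s)
    (hBf : ∀ t, Bf t = A t - A T)
    (Φ : ℕ → (ℝ → ℝ) → ℝ)
    (hΦ : ∀ (n : ℕ) (h : ℝ → ℝ), Φ n h = ∫ t in (0:ℝ)..T, Real.exp ((n:ℝ)^2 * Bf t) * h t)
    (k M μ : ℝ) (hk : 2 < k) (hM : 0 ≤ M) (hμ0 : 0 < μ) (hμ1 : μ ≤ 1)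
    (f : ℕ → ℝ)
    (hwsum : Summable (fun n : ℕ => ((1:ℝ) + ((n:ℝ)+1)^2) ^ (2*k) * (f (n+1))^2))
    (hbound : (∑' n : ℕ, ((1:ℝ) + ((n:ℝ)+1)^2) ^ (2*k) * (f (n+1))^2) ≤ M^2) :
    Real.sqrt (∑' n : ℕ, (μ^2 * f (n+1) / (μ^2 + (Φ (n+1) φ)^2))^2) ≤
      max 1 (D₂^2 / (B₁ * (1 - Real.exp (-D₁ * T)))^2) * M * μ := by
  have hD₂ : 0 < D₂ := lt_of_lt_of_le hD₁ hD₁₂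
  set c' : ℝ := B₁ * (1 - Real.exp (-D₁ * T)) with hc'_def
  have hexp1 : Real.exp (-D₁ * T) < 1 := by
    apply Real.exp_lt_one_iff.mpr
    nlinarith
  have hc' : 0 < c' := by
    rw [hc'_def]; exact mul_pos hB₁ (by linarith)
  set C : ℝ := max 1 (D₂^2 / c'^2) with hC_def
  have hC1 : (1:ℝ) ≤ C := le_max_left _ _
  have hC0 : (0:ℝ) ≤ C := le_trans zero_le_one hC1
  -- lower bound on Φ
  have hΦlb : ∀ n : ℕ, c' / (((n:ℝ)+1)^2 * D₂) ≤ Φ (n+1) φ := by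
    intro n
    have hq : (1:ℝ) ≤ ((n:ℝ)+1)^2 := by nlinarith [Nat.cast_nonneg (α := ℝ) n]
    have h := phi_lower_bound T D₁ D₂ B₁ hT hD₁ hD₁₂ hB₁ a φ ha hφc haB
      (fun t ht => (hφB t ht).1) A Bf hA hBf (((n:ℝ)+1)^2) hq
    rw [hΦ]
    push_cast
    exact h
  -- per-term bound
  have key : ∀ n : ℕ, (μ^2 * f (n+1) / (μ^2 + (Φ (n+1) φ)^2))^2 ≤
      (C*μ)^2 * (((1:ℝ) + ((n:ℝ)+1)^2) ^ (2*k) * (f (n+1))^2) := by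
    intro n
    set m : ℝ := (n:ℝ)+1 with hm_def
    have hm1 : (1:ℝ) ≤ m := by
      rw [hm_def]; nlinarith [Nat.cast_nonneg (α := ℝ) n]
    set Φn := Φ (n+1) φ with hΦn_def
    have hlb : c' / (m^2 * D₂) ≤ Φn := hΦlb n
    have hΦpos : 0 < Φn := lt_of_lt_of_le (by positivity) hlb
    have h2 : μ^2/(μ^2+Φn^2) ≤ μ/(2*Φn) := by
      rw [div_le_div_iff₀ (by positivity) (by positivity)]
      nlinarith [sq_nonneg (μ - Φn)]
    have h3 : μ/(2*Φn) ≤ μ*(m^2*D₂)/(2*c') := by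
      rw [div_le_div_iff₀ (by positivity) (by positivity)]
      have h := (div_le_iff₀ (by positivity : (0:ℝ) < m^2*D₂)).mp hlb
      nlinarith
    have hmk : m^2 ≤ ((1:ℝ)+m^2)^k := by
      have e2 : ((1:ℝ)+m^2)^(1:ℝ) ≤ ((1:ℝ)+m^2)^k :=
        Real.rpow_le_rpow_of_exponent_le (by nlinarith) (by linarith)
      rw [Real.rpow_one] at e2
      linarith
    have hDC : D₂/(2*c') ≤ C := by
      rcases le_total (D₂/c') 1 with h|h
      · have hd : D₂ ≤ c' := (div_le_one hc').mp h
        have : D₂/(2*c') ≤ 1 := by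
          rw [div_le_one (by positivity)]; linarith
        exact le_trans this hC1
      · have hd : c' ≤ D₂ := (one_le_div hc').mp h
        have h1 : D₂/(2*c') ≤ D₂^2/c'^2 := by
          rw [div_le_div_iff₀ (by positivity) (by positivity)]
          nlinarith [mul_le_mul_of_nonneg_right hd hc'.le,
            mul_le_mul_of_nonneg_left (mul_le_mul_of_nonneg_right hd hc'.le) hD₂.le]
        exact le_trans h1 (le_max_right _ _)
    have h4 : μ*(m^2*D₂)/(2*c') ≤ C*μ*((1:ℝ)+m^2)^k := by
      have hmul : D₂/(2*c') * m^2 ≤ C * ((1:ℝ)+m^2)^k :=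
        mul_le_mul hDC hmk (by positivity) hC0
      calc μ*(m^2*D₂)/(2*c') = μ * (D₂/(2*c') * m^2) := by ring
        _ ≤ μ * (C * ((1:ℝ)+m^2)^k) := mul_le_mul_of_nonneg_left hmul hμ0.le
        _ = C*μ*((1:ℝ)+m^2)^k := by ring
    have h5 : μ^2/(μ^2+Φn^2) ≤ C*μ*((1:ℝ)+m^2)^k := le_trans h2 (le_trans h3 h4)
    have hrw : ((1:ℝ)+m^2)^(2*k) = (((1:ℝ)+m^2)^k)^2 := by
      rw [show (2*k) = k + k by ring, Real.rpow_add (by positivity)]; ring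
    calc (μ^2 * f (n+1) / (μ^2 + Φn^2))^2
        = (μ^2/(μ^2+Φn^2))^2 * (f (n+1))^2 := by ring
      _ ≤ (C*μ*((1:ℝ)+m^2)^k)^2 * (f (n+1))^2 :=
          mul_le_mul_of_nonneg_right (pow_le_pow_left₀ (by positivity) h5 2) (sq_nonneg _)
      _ = (C*μ)^2 * (((1:ℝ)+m^2)^(2*k) * (f (n+1))^2) := by rw [hrw]; ring
  have hsum2 : Summable (fun n : ℕ => (μ^2 * f (n+1) / (μ^2 + (Φ (n+1) φ)^2))^2) :=
    Summable.of_nonneg_of_le (fun n => sq_nonneg _) key (hwsum.mul_left _)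
  have htsum : (∑' n : ℕ, (μ^2 * f (n+1) / (μ^2 + (Φ (n+1) φ)^2))^2) ≤ (C*μ)^2 * M^2 := by
    calc (∑' n : ℕ, (μ^2 * f (n+1) / (μ^2 + (Φ (n+1) φ)^2))^2)
        ≤ ∑' n : ℕ, (C*μ)^2 * (((1:ℝ) + ((n:ℝ)+1)^2) ^ (2*k) * (f (n+1))^2) :=
          Summable.tsum_le_tsum key hsum2 (hwsum.mul_left _)
      _ = (C*μ)^2 * ∑' n : ℕ, ((1:ℝ) + ((n:ℝ)+1)^2) ^ (2*k) * (f (n+1))^2 := tsum_mul_left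
      _ ≤ (C*μ)^2 * M^2 := mul_le_mul_of_nonneg_left hbound (by positivity)
  calc Real.sqrt (∑' n : ℕ, (μ^2 * f (n+1) / (μ^2 + (Φ (n+1) φ)^2))^2)
      ≤ Real.sqrt ((C*μ)^2 * M^2) := Real.sqrt_le_sqrt htsum
    _ = C * M * μ := by
        rw [show (C*μ)^2*M^2 = (C*M*μ)^2 by ring, Real.sqrt_sq (by positivity)]
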